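/- Define a sequence of finite p-groups by P₀ = C_p and P_{n+1} = P_n ≀ C_p (wreath product with C_p permuting p copies cyclically), with subgroups Q₀ = 1, Q_{n+1} = Q_n ≀ C_p, and A₀ = P₀, A_{n+1} = A_n^{×p} (the p-fold direct product inside the base of the wreath product). Then for each n: A_n is elementary abelian of rank p^n, A_n is normal in P_n, A_n ∩ Q_n = 1, and A_n Q_n = P_n. -/

import Mathlib

open Pointwise

variable (p : ℕ) [Fact p.Prime]

/-- The cyclic shift automorphism action of `C_p` on the `p`-fold direct power. -/
def shiftHom (P : Type) [Group P] : Multiplicative (ZMod p) →* MulAut (ZMod p → P) where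
  toFun k :=
    { toFun := fun f j => f (j + k.toAdd)
      invFun := fun f j => f (j - k.toAdd)
      left_inv := fun f => funext fun j => by simp
      right_inv := fun f => funext fun j => by simp
      map_mul' := fun f g => rfl }
  map_one' := by
    refine MulEquiv.ext fun f => funext fun j => ?_
    simp
  map_mul' := by
    intro a b
    refine MulEquiv.ext fun f => funext fun j => ?_
    exact congrArg f (add_assoc j a.toAdd b.toAdd).symm

/-- The sequence of iterated wreath products `P₀ = C_p`, `P_{n+1} = P_n ≀ C_p`. -/
def Pseq : ℕ → GrpCat
  | 0 => GrpCat.of (Multiplicative (ZMod p))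
  | n + 1 => GrpCat.of ((ZMod p → Pseq n) ⋊[shiftHom p (Pseq n)] Multiplicative (ZMod p))

/-- The subgroups `Q₀ = 1`, `Q_{n+1} = Q_n ≀ C_p`. -/
def Qseq : ∀ n, Subgroup (Pseq p n)
  | 0 => ⊥
  | n + 1 =>
    { carrier := {x : (ZMod p → Pseq p n) ⋊[shiftHom p (Pseq p n)] Multiplicative (ZMod p) |
        ∀ j, x.left j ∈ Qseq n}
      one_mem' := fun j => (Qseq n).one_mem
      mul_mem' := fun {a b} ha hb j => (Qseq n).mul_mem (ha j) (hb (j + a.right.toAdd))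
      inv_mem' := fun {a} ha j => (Qseq n).inv_mem (ha (j + a.right⁻¹.toAdd)) }

/-- The subgroups `A₀ = P₀`, `A_{n+1} = A_n^{×p}` inside the base of the wreath
product. -/
def Aseq : ∀ n, Subgroup (Pseq p n)
  | 0 => ⊤
  | n + 1 => Subgroup.map
      (SemidirectProduct.inl :
        (ZMod p → Pseq p n) →* (ZMod p → Pseq p n) ⋊[shiftHom p (Pseq p n)] Multiplicative (ZMod p))
      (Subgroup.pi Set.univ (fun _ : ZMod p => Aseq n))

/-- For each `n`: `A_n` is elementary abelian of rank `p^n` (i.e. abelian of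
exponent `p` and order `p^(p^n)`), `A_n` is normal in `P_n`, `A_n ∩ Q_n = 1`,
and `A_n Q_n = P_n`. -/
lemma memA_succ {n : ℕ}
    {x : (ZMod p → Pseq p n) ⋊[shiftHom p (Pseq p n)] Multiplicative (ZMod p)} :
    x ∈ Aseq p (n+1) ↔ x.right = 1 ∧ ∀ j, x.left j ∈ Aseq p n := by
  constructor
  · rintro ⟨f, hf, rfl⟩
    exact ⟨rfl, fun j => hf j (Set.mem_univ j)⟩
  · rintro ⟨hr, hl⟩
    exact ⟨x.left, fun j _ => hl j, SemidirectProduct.ext rfl hr.symm⟩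

lemma memQ_succ {n : ℕ}
    {x : (ZMod p → Pseq p n) ⋊[shiftHom p (Pseq p n)] Multiplicative (ZMod p)} :
    x ∈ Qseq p (n+1) ↔ ∀ j, x.left j ∈ Qseq p n := Iff.rfl

theorem stmt_12 (n : ℕ) :
    (∀ x ∈ Aseq p n, x ^ p = 1) ∧
    (∀ x ∈ Aseq p n, ∀ y ∈ Aseq p n, x * y = y * x) ∧
    Nat.card (Aseq p n) = p ^ (p ^ n) ∧
    (Aseq p n).Normal ∧
    Aseq p n ⊓ Qseq p n = ⊥ ∧
    ((Aseq p n : Set (Pseq p n)) * (Qseq p n : Set (Pseq p n)) = Set.univ) := by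
  induction n with
  | zero =>
    refine ⟨?_, ?_, ?_, ?_, ?_, ?_⟩
    · intro x _
      exact (show ∀ y : Multiplicative (ZMod p), y ^ p = 1 from fun y => by
        rw [← ofAdd_toAdd y, ← ofAdd_nsmul]
        simp [nsmul_eq_mul, ZMod.natCast_self]) x
    · intro x _ y _
      exact (show ∀ a b : Multiplicative (ZMod p), a * b = b * a from mul_comm) x y
    · have h0 : Nat.card (Multiplicative (ZMod p)) = p := Nat.card_zmod p
      rw [pow_zero, pow_one, show Aseq p 0 = ⊤ from rfl, Subgroup.card_top]
      exact h0
    · show (⊤ : Subgroup (Pseq p 0)).Normal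
      infer_instance
    · show (⊤ ⊓ ⊥ : Subgroup (Pseq p 0)) = ⊥
      simp
    · show ((⊤ : Subgroup (Pseq p 0)) : Set (Pseq p 0)) * ((⊥ : Subgroup (Pseq p 0)) : Set (Pseq p 0)) = Set.univ
      refine Set.eq_univ_of_forall fun x => ?_
      rw [Subgroup.coe_top, Subgroup.coe_bot]
      exact ⟨x, trivial, 1, rfl, mul_one x⟩
  | succ n ih =>
    obtain ⟨ih1, ih2, ih3, ih4, ih5, ih6⟩ := ih
    refine ⟨?_, ?_, ?_, ?_, ?_, ?_⟩
    · intro x hx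
      obtain ⟨hr, hl⟩ := (memA_succ p).mp hx
      have hx' : x = SemidirectProduct.inl x.left := SemidirectProduct.ext rfl hr
      have hp : x.left ^ p = 1 := funext fun j => ih1 _ (hl j)
      have key : (SemidirectProduct.inl x.left :
          (ZMod p → Pseq p n) ⋊[shiftHom p (Pseq p n)] Multiplicative (ZMod p)) ^ p = 1 := by
        rw [← map_pow, hp, map_one]
      rw [hx']
      exact key
    · intro x hx y hy
      obtain ⟨hxr, hxl⟩ := (memA_succ p).mp hx
      obtain ⟨hyr, hyl⟩ := (memA_succ p).mp hy
      have key : (SemidirectProduct.inl x.left :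
          (ZMod p → Pseq p n) ⋊[shiftHom p (Pseq p n)] Multiplicative (ZMod p)) *
          SemidirectProduct.inl y.left =
          SemidirectProduct.inl y.left * SemidirectProduct.inl x.left := by
        rw [← map_mul, ← map_mul]
        congr 1
        exact funext fun j => ih2 _ (hxl j) _ (hyl j)
      rw [show x = SemidirectProduct.inl x.left from SemidirectProduct.ext rfl hxr,
        show y = SemidirectProduct.inl y.left from SemidirectProduct.ext rfl hyr]
      exact key
    · have e1 := (Subgroup.pi Set.univ fun _ : ZMod p => Aseq p n).equivMapOfInjective
        (SemidirectProduct.inl : _ →* (ZMod p → Pseq p n) ⋊[shiftHom p (Pseq p n)]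
          Multiplicative (ZMod p)) SemidirectProduct.inl_injective
      have e2 : (Subgroup.pi Set.univ fun _ : ZMod p => Aseq p n) ≃ (ZMod p → Aseq p n) :=
        { toFun := fun f j => ⟨f.1 j, f.2 j (Set.mem_univ j)⟩
          invFun := fun f => ⟨fun j => f j, fun j _ => (f j).2⟩
          left_inv := fun f => Subtype.ext (funext fun j => rfl)
          right_inv := fun f => rfl }
      have hc : Nat.card (Aseq p (n+1)) = Nat.card (ZMod p → Aseq p n) :=
        Nat.card_congr (e1.toEquiv.symm.trans e2)
      rw [hc, Nat.card_fun, ih3, Nat.card_zmod, ← pow_mul, ← pow_succ]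
    · refine ⟨fun x hx g => ?_⟩
      obtain ⟨hr, hl⟩ := (memA_succ p).mp hx
      refine (memA_succ p).mpr ⟨?_, fun j => ?_⟩
      · show g.right * x.right * g.right⁻¹ = 1
        rw [hr, mul_one, mul_inv_cancel]
      · show g.left j * x.left (j + g.right.toAdd) *
            (g.left (j + (g.right * x.right).toAdd + (g.right⁻¹).toAdd))⁻¹ ∈ Aseq p n
        have harg : j + (g.right * x.right).toAdd + (g.right⁻¹).toAdd = j := by
          rw [hr, mul_one]
          simp
        rw [harg]
        exact ih4.conj_mem _ (hl _) (g.left j)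
    · rw [eq_bot_iff]
      intro x hx
      obtain ⟨hA, hQ⟩ := Subgroup.mem_inf.mp hx
      obtain ⟨hr, hl⟩ := (memA_succ p).mp hA
      have h1 : ∀ j, x.left j = 1 := fun j => by
        have hm : x.left j ∈ Aseq p n ⊓ Qseq p n := Subgroup.mem_inf.mpr ⟨hl j, hQ j⟩
        rwa [ih5, Subgroup.mem_bot] at hm
      exact Subgroup.mem_bot.mpr (SemidirectProduct.ext (funext h1) hr)
    · refine Set.eq_univ_of_forall fun x => ?_
      have hx : ∀ j, ∃ y ∈ (Aseq p n : Set (Pseq p n)), ∃ z ∈ (Qseq p n : Set (Pseq p n)),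
          y * z = SemidirectProduct.left x j := fun j => by
        have hm : SemidirectProduct.left x j ∈
            ((Aseq p n : Set (Pseq p n)) * (Qseq p n : Set (Pseq p n))) := by
          rw [ih6]; trivial
        exact Set.mem_mul.mp hm
      choose a ha b hb hab using hx
      refine Set.mem_mul.mpr ⟨SemidirectProduct.inl a,
        (memA_succ p).mpr ⟨rfl, fun j => ha j⟩,
        ⟨b, SemidirectProduct.right x⟩, (fun j => hb j), ?_⟩
      refine SemidirectProduct.ext ?_ (one_mul _)
      show a * (shiftHom p (Pseq p n) 1) b = SemidirectProduct.left x
      rw [map_one]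
      exact funext fun j => hab j
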